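/- Let m ∈ ℕ₀ and n ∈ ℤ with |n| ≤ m, and let P_n^{-m}(z,w) = (-1)^n ∑_{k} binom(m,k+|n|)binom(m,k) z^{k + max(-n,0)} w^{k + max(n,0)} (1-zw)^{-m}. Then D⁺ P_n^{-m} = (-m - n - 1) P_{n+1}^{-m} and D⁻ P_n^{-m} = (-m + n - 1) P_{n-1}^{-m} on {(z,w) ∈ ℂ² : zw ≠ 1}, where D⁺ = ∂_z - w²∂_w and D⁻ = ∂_w - z²∂_z. -/

import Mathlib

open Complex

/-- Exceptional Poisson Fourier mode `P_n^{-m}` (the defining sum is finite since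
`Nat.choose m j = 0` for `j > m`; it vanishes identically when `|n| > m`). -/
noncomputable def PFM (m : ℕ) (n : ℤ) (z w : ℂ) : ℂ :=
  (-1 : ℂ) ^ n * (∑' k : ℕ,
      (Nat.choose m (k + n.natAbs) : ℂ) * (Nat.choose m k : ℂ) *
        z ^ (k + (max (-n) 0).toNat) * w ^ (k + (max n 0).toNat)) / (1 - z * w) ^ m

section Aux

open Finset

lemma key_choose (m k : ℕ) : ((k:ℂ)+1) * (m.choose (k+1)) = ((m:ℂ)-k) * (m.choose k) := by
  rcases lt_or_ge k m with h|h
  · have h2 := congrArg (Nat.cast : ℕ → ℂ) (Nat.choose_succ_right_eq m k)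
    push_cast [Nat.cast_sub h.le] at h2
    linear_combination h2
  · rcases eq_or_lt_of_le h with rfl|h'
    · simp [Nat.choose_succ_self]
    · simp [Nat.choose_eq_zero_of_lt h', Nat.choose_eq_zero_of_lt (h'.trans (Nat.lt_succ_self k))]

lemma shift_sum (m : ℕ) (f : ℕ → ℂ) (h0 : f 0 = 0) (hm : f (m+1) = 0) :
    ∑ k ∈ Finset.range (m+1), f k = ∑ k ∈ Finset.range (m+1), f (k+1) := by
  rw [Finset.sum_range_succ' f m, Finset.sum_range_succ (fun k => f (k+1)) m, h0, hm]

lemma pow_aux (w : ℂ) (e : ℕ) : w^2 * ((e:ℂ) * w^(e-1)) = (e:ℂ) * w^(e+1) := by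
  cases e with
  | zero => simp
  | succ e => rw [Nat.add_sub_cancel]; ring

/-- Numerator polynomial of the exceptional Poisson Fourier mode. -/
noncomputable def Q (m a b : ℕ) (z w : ℂ) : ℂ :=
  ∑ k ∈ Finset.range (m+1),
    (m.choose (k+a+b) : ℂ) * (m.choose k : ℂ) * z^(k+a) * w^(k+b)

/-- `z`-derivative of `Q`. -/
noncomputable def Qz (m a b : ℕ) (z w : ℂ) : ℂ :=
  ∑ k ∈ Finset.range (m+1),
    (m.choose (k+a+b) : ℂ) * (m.choose k : ℂ) * (((k+a : ℕ) : ℂ) * z^(k+a-1)) * w^(k+b)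

/-- `w`-derivative of `Q`. -/
noncomputable def Qw (m a b : ℕ) (z w : ℂ) : ℂ :=
  ∑ k ∈ Finset.range (m+1),
    (m.choose (k+a+b) : ℂ) * (m.choose k : ℂ) * z^(k+a) * (((k+b : ℕ) : ℂ) * w^(k+b-1))

lemma coreA (m b : ℕ) (z w : ℂ) :
    Qz m 0 b z w - w^2 * Qw m 0 b z w + (m:ℂ) * w * Q m 0 b z w
      = ((m:ℂ) + b + 1) * Q m 0 (b+1) z w := by
  unfold Q Qz Qw
  rw [shift_sum m (fun k => (m.choose (k+0+b) : ℂ) * (m.choose k : ℂ) *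
        (((k+0 : ℕ) : ℂ) * z^(k+0-1)) * w^(k+b)) (by simp) (by simp [Nat.choose_succ_self])]
  rw [Finset.mul_sum, Finset.mul_sum, Finset.mul_sum, ← Finset.sum_sub_distrib,
    ← Finset.sum_add_distrib]
  refine Finset.sum_congr rfl fun k _ => ?_
  have h1 := key_choose m k
  have h2 := key_choose m (k+b)
  have hw := pow_aux w (k+b)
  simp only [add_zero, Nat.add_sub_cancel]
  rw [show k+1+b = k+b+1 from by omega, show k+(b+1) = k+b+1 from by omega]
  push_cast at h1 h2 hw ⊢
  linear_combination ((m.choose (k+b+1) : ℂ) * z^k * w^(k+b+1)) * h1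
    - ((m.choose k : ℂ) * z^k * w^(k+b+1)) * h2
    - ((m.choose (k+b) : ℂ) * (m.choose k : ℂ) * z^k) * hw

lemma coreB (m a : ℕ) (ha : 1 ≤ a) (z w : ℂ) :
    Qz m a 0 z w - w^2 * Qw m a 0 z w + (m:ℂ) * w * Q m a 0 z w
      = ((m:ℂ) - a + 1) * Q m (a-1) 0 z w := by
  unfold Q Qz Qw
  have hsh := shift_sum m (fun k =>
      ((m:ℂ) - a + 1) * ((m.choose (k+(a-1)+0) : ℂ) * (m.choose k : ℂ) * z^(k+(a-1)) * w^(k+0))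
        - (m.choose (k+a+0) : ℂ) * (m.choose k : ℂ) * (((k+a : ℕ) : ℂ) * z^(k+a-1)) * w^(k+0))
    (by
      have hk := key_choose m (a-1)
      rw [show (a-1)+1 = a from by omega] at hk
      push_cast [Nat.cast_sub ha] at hk ⊢
      simp only [zero_add, add_zero, Nat.choose_zero_right, Nat.cast_one, mul_one, pow_zero]
      linear_combination (-(z^(a-1))) * hk)
    (by simp [Nat.choose_succ_self])
  have h2 : ∑ k ∈ Finset.range (m+1), (fun k =>
      ((m:ℂ) - a + 1) * ((m.choose (k+(a-1)+0) : ℂ) * (m.choose k : ℂ) * z^(k+(a-1)) * w^(k+0))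
        - (m.choose (k+a+0) : ℂ) * (m.choose k : ℂ) * (((k+a : ℕ) : ℂ) * z^(k+a-1)) * w^(k+0)) (k+1)
      = ∑ k ∈ Finset.range (m+1),
        (-(w^2) * ((m.choose (k+a+0) : ℂ) * (m.choose k : ℂ) * z^(k+a) * (((k+0 : ℕ) : ℂ) * w^(k+0-1)))
          + ((m:ℂ) * w) * ((m.choose (k+a+0) : ℂ) * (m.choose k : ℂ) * z^(k+a) * w^(k+0))) := by
    refine Finset.sum_congr rfl fun k _ => ?_
    dsimp only
    have h1 := key_choose m k
    have h2 := key_choose m (k+a)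
    have hw := pow_aux w k
    simp only [add_zero]
    rw [show k+1+(a-1) = k+a from by omega, show k+1+a-1 = k+a from by omega,
      show k+1+a = k+a+1 from by omega]
    push_cast at h1 h2 hw ⊢
    linear_combination ((m.choose (k+a) : ℂ) * (m.choose k : ℂ) * z^(k+a)) * hw
      - ((m.choose (k+1) : ℂ) * z^(k+a) * w^(k+1)) * h2
      + ((m.choose (k+a) : ℂ) * z^(k+a) * w^(k+1)) * h1
  rw [h2, Finset.sum_sub_distrib, ← Finset.mul_sum, Finset.sum_add_distrib,
    ← Finset.mul_sum, ← Finset.mul_sum] at hsh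
  linear_combination -hsh

lemma hasDerivAt_Q_z (m a b : ℕ) (z w : ℂ) :
    HasDerivAt (fun z' => Q m a b z' w) (Qz m a b z w) z := by
  unfold Q Qz
  exact HasDerivAt.fun_sum fun k _ =>
    ((hasDerivAt_pow (k+a) z).const_mul ((m.choose (k+a+b) : ℂ) * (m.choose k : ℂ))).mul_const _

lemma hasDerivAt_Q_w (m a b : ℕ) (z w : ℂ) :
    HasDerivAt (fun w' => Q m a b z w') (Qw m a b z w) w := by
  unfold Q Qw
  exact HasDerivAt.fun_sum fun k _ =>
    (hasDerivAt_pow (k+b) w).const_mul ((m.choose (k+a+b) : ℂ) * (m.choose k : ℂ) * z^(k+a))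

lemma PFM_eq (m : ℕ) (n : ℤ) (z w : ℂ) :
    PFM m n z w
      = (-1:ℂ)^n * Q m (max (-n) 0).toNat (max n 0).toNat z w / (1 - z*w)^m := by
  unfold PFM Q
  rw [tsum_eq_sum (f := fun k : ℕ => (Nat.choose m (k + n.natAbs) : ℂ) * (Nat.choose m k : ℂ) *
        z ^ (k + (max (-n) 0).toNat) * w ^ (k + (max n 0).toNat)) (s := Finset.range (m+1))
    (by
      intro k hk
      simp only [Finset.mem_range, not_lt] at hk
      simp [Nat.choose_eq_zero_of_lt (show m < k from by omega)])]
  congr 2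
  refine Finset.sum_congr rfl fun k _ => ?_
  rw [show k + n.natAbs = k + (max (-n) 0).toNat + (max n 0).toNat from by omega]

lemma Dz_eq (m : ℕ) (n : ℤ) (z w : ℂ) (h : z * w ≠ 1) :
    deriv (fun z' => PFM m n z' w) z
      = (-1:ℂ)^n * (Qz m (max (-n) 0).toNat (max n 0).toNat z w * (1-z*w)
          + (m:ℂ) * w * Q m (max (-n) 0).toNat (max n 0).toNat z w) / (1-z*w)^(m+1) := by
  have hu : (1:ℂ) - z*w ≠ 0 := sub_ne_zero.mpr (Ne.symm h)
  set a := (max (-n) 0).toNat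
  set b := (max n 0).toNat
  have heq : (fun z' => PFM m n z' w) = fun z' => (-1:ℂ)^n * Q m a b z' w / (1 - z'*w)^m :=
    funext fun z' => PFM_eq m n z' w
  have hnum : HasDerivAt (fun z' => (-1:ℂ)^n * Q m a b z' w) ((-1:ℂ)^n * Qz m a b z w) z :=
    (hasDerivAt_Q_z m a b z w).const_mul _
  have hden : HasDerivAt (fun z' => (1 - z'*w)^m) ((m:ℂ) * (1-z*w)^(m-1) * (-(1*w))) z := by
    exact (((hasDerivAt_id z).mul_const w).const_sub 1).pow m
  have D1 : deriv (fun z' => PFM m n z' w) z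
      = ((-1:ℂ)^n * Qz m a b z w * (1-z*w)^m
          - (-1:ℂ)^n * Q m a b z w * ((m:ℂ) * (1-z*w)^(m-1) * (-(1*w)))) / ((1-z*w)^m)^2 := by
    rw [heq]
    exact (hnum.div hden (pow_ne_zero m hu)).deriv
  rw [D1]
  cases m with
  | zero => field_simp; ring
  | succ m =>
    rw [Nat.add_sub_cancel]
    field_simp
    ring

lemma Dw_eq (m : ℕ) (n : ℤ) (z w : ℂ) (h : z * w ≠ 1) :
    deriv (fun w' => PFM m n z w') w
      = (-1:ℂ)^n * (Qw m (max (-n) 0).toNat (max n 0).toNat z w * (1-z*w)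
          + (m:ℂ) * z * Q m (max (-n) 0).toNat (max n 0).toNat z w) / (1-z*w)^(m+1) := by
  have hu : (1:ℂ) - z*w ≠ 0 := sub_ne_zero.mpr (Ne.symm h)
  set a := (max (-n) 0).toNat
  set b := (max n 0).toNat
  have heq : (fun w' => PFM m n z w') = fun w' => (-1:ℂ)^n * Q m a b z w' / (1 - z*w')^m :=
    funext fun w' => PFM_eq m n z w'
  have hnum : HasDerivAt (fun w' => (-1:ℂ)^n * Q m a b z w') ((-1:ℂ)^n * Qw m a b z w) w :=
    (hasDerivAt_Q_w m a b z w).const_mul _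
  have hden : HasDerivAt (fun w' => (1 - z*w')^m) ((m:ℂ) * (1-z*w)^(m-1) * (-(z*1))) w := by
    exact (((hasDerivAt_id w).const_mul z).const_sub 1).pow m
  have D1 : deriv (fun w' => PFM m n z w') w
      = ((-1:ℂ)^n * Qw m a b z w * (1-z*w)^m
          - (-1:ℂ)^n * Q m a b z w * ((m:ℂ) * (1-z*w)^(m-1) * (-(z*1)))) / ((1-z*w)^m)^2 := by
    rw [heq]
    exact (hnum.div hden (pow_ne_zero m hu)).deriv
  rw [D1]
  cases m with
  | zero => field_simp; ring
  | succ m =>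
    rw [Nat.add_sub_cancel]
    field_simp
    ring

lemma neg_one_zpow_succ (n : ℤ) : ((-1:ℂ))^(n+1) = -((-1:ℂ))^n := by
  rw [zpow_add₀ (by norm_num : (-1:ℂ) ≠ 0), zpow_one]
  ring

lemma plus (m : ℕ) (n : ℤ) : ∀ z w : ℂ, z * w ≠ 1 →
    deriv (fun z' => PFM m n z' w) z - w ^ 2 * deriv (fun w' => PFM m n z w') w
      = (-(m : ℂ) - (n : ℂ) - 1) * PFM m (n + 1) z w := by
  intro z w h
  have hu : (1:ℂ) - z*w ≠ 0 := sub_ne_zero.mpr (Ne.symm h)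
  have hmain : Qz m (max (-n) 0).toNat (max n 0).toNat z w
        - w^2 * Qw m (max (-n) 0).toNat (max n 0).toNat z w
        + (m:ℂ) * w * Q m (max (-n) 0).toNat (max n 0).toNat z w
      = ((m:ℂ) + (n:ℂ) + 1) * Q m (max (-(n+1)) 0).toNat (max (n+1) 0).toNat z w := by
    rcases le_or_gt 0 n with hn0|hn0
    · have ha : (max (-n) 0).toNat = 0 := by omega
      have ha1 : (max (-(n+1)) 0).toNat = 0 := by omega
      have hb1 : (max (n+1) 0).toNat = (max n 0).toNat + 1 := by omega
      have hcast : (((max n 0).toNat : ℂ)) = (n : ℂ) := by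
        have h' : (((max n 0).toNat : ℤ)) = n := by omega
        exact_mod_cast congrArg (Int.cast : ℤ → ℂ) h'
      rw [ha, ha1, hb1]
      have := coreA m (max n 0).toNat z w
      rw [hcast] at this
      exact this
    · have hb : (max n 0).toNat = 0 := by omega
      have ha1 : 1 ≤ (max (-n) 0).toNat := by omega
      have haa : (max (-(n+1)) 0).toNat = (max (-n) 0).toNat - 1 := by omega
      have hb1 : (max (n+1) 0).toNat = 0 := by omega
      have hcast : (((max (-n) 0).toNat : ℂ)) = -(n : ℂ) := by
        have h' : (((max (-n) 0).toNat : ℤ)) = -n := by omega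
        exact_mod_cast congrArg (Int.cast : ℤ → ℂ) h'
      rw [hb, haa, hb1]
      have := coreB m (max (-n) 0).toNat ha1 z w
      rw [hcast] at this
      linear_combination this
  rw [Dz_eq m n z w h, Dw_eq m n z w h, PFM_eq m (n+1) z w, neg_one_zpow_succ]
  rw [show w^2 * ((-1:ℂ)^n * (Qw m (max (-n) 0).toNat (max n 0).toNat z w * (1-z*w)
        + (m:ℂ) * z * Q m (max (-n) 0).toNat (max n 0).toNat z w) / (1-z*w)^(m+1))
      = w^2 * ((-1:ℂ)^n * (Qw m (max (-n) 0).toNat (max n 0).toNat z w * (1-z*w)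
        + (m:ℂ) * z * Q m (max (-n) 0).toNat (max n 0).toNat z w)) / (1-z*w)^(m+1)
    from (mul_div_assoc _ _ _).symm, div_sub_div_same, ← mul_div_assoc]
  rw [div_eq_div_iff (pow_ne_zero _ hu) (pow_ne_zero _ hu)]
  linear_combination (((-1:ℂ)^n * (1-z*w)^m * (1-z*w))) * hmain

lemma neg_one_zpow_neg (n : ℤ) : ((-1:ℂ))^(-n) = ((-1:ℂ))^n := by
  have key : ((-1:ℂ))^n * ((-1:ℂ))^n = 1 := by
    rw [← zpow_add₀ (by norm_num : (-1:ℂ) ≠ 0), show n+n = 2*n from by ring, zpow_mul]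
    norm_num
  rw [zpow_neg]
  exact inv_eq_of_mul_eq_one_left key

lemma PFM_swap (m : ℕ) (n : ℤ) (z w : ℂ) : PFM m n z w = PFM m (-n) w z := by
  unfold PFM
  simp only [Int.natAbs_neg, neg_neg, neg_one_zpow_neg]
  rw [mul_comm w z]
  congr 2
  exact tsum_congr fun k => by ring

end Aux

/-- Shift identities: `D⁺ P_n^{-m} = (-m-n-1) P_{n+1}^{-m}` and
`D⁻ P_n^{-m} = (-m+n-1) P_{n-1}^{-m}` on `{zw ≠ 1}`, where `D⁺ = ∂_z - w²∂_w`
and `D⁻ = ∂_w - z²∂_z`. -/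
theorem stmt13 (m : ℕ) (n : ℤ) (hn : n.natAbs ≤ m) :
    ∀ z w : ℂ, z * w ≠ 1 →
      (deriv (fun z' => PFM m n z' w) z - w ^ 2 * deriv (fun w' => PFM m n z w') w
          = (-(m : ℂ) - (n : ℂ) - 1) * PFM m (n + 1) z w)
      ∧ (deriv (fun w' => PFM m n z w') w - z ^ 2 * deriv (fun z' => PFM m n z' w) z
          = (-(m : ℂ) + (n : ℂ) - 1) * PFM m (n - 1) z w) := by
  intro z w h
  refine ⟨plus m n z w h, ?_⟩
  have h' : w * z ≠ 1 := by rwa [mul_comm]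
  have := plus m (-n) w z h'
  rw [show (fun w' => PFM m (-n) w' z) = (fun w' => PFM m n z w') from
      funext fun w' => (PFM_swap m n z w').symm,
    show (fun z' => PFM m (-n) w z') = (fun z' => PFM m n z' w) from
      funext fun z' => (PFM_swap m n z' w).symm,
    show (-n + 1 : ℤ) = -(n-1) from by ring, ← PFM_swap m (n-1) z w] at this
  rw [this]
  push_cast
  ring
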